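/- Let H = H₁ ⊕ H₂ and A a bounded J-self-adjoint operator with 0 ≤ Â ≤ 1, where Â := AP₁ + (1−A)P₂. Write A in block form with A_even = P₁AP₁ + P₂AP₂. Then ‖A‖ = 1 if and only if ‖A_even‖ = 1. -/

import Mathlib

open scoped InnerProductSpace ComplexConjugate

noncomputable section

/-- The absolute value `|A| = √(A*A)` of a bounded operator on a complex Hilbert space. -/
noncomputable def absCLM {H : Type} [NormedAddCommGroup H] [InnerProductSpace ℂ H]
    [CompleteSpace H] (A : H →L[ℂ] H) : H →L[ℂ] H :=
  CFC.sqrt (ContinuousLinearMap.adjoint A * A)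

/-- The trace of an operator computed along a Hilbert basis. -/
noncomputable def traceAlong {H : Type} [NormedAddCommGroup H] [InnerProductSpace ℂ H]
    [CompleteSpace H] {ι : Type} (b : HilbertBasis ι ℂ H) (A : H →L[ℂ] H) : ℂ :=
  ∑' i, ⟪b i, A (b i)⟫_ℂ

/-- `A` is trace class: `Tr |A| < ∞` along the Hilbert basis `b`. -/
def IsTraceClassAlong {H : Type} [NormedAddCommGroup H] [InnerProductSpace ℂ H]
    [CompleteSpace H] {ι : Type} (b : HilbertBasis ι ℂ H) (A : H →L[ℂ] H) : Prop :=
  Summable fun i => (⟪b i, absCLM A (b i)⟫_ℂ).re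

/-- The trace norm `‖A‖₁ = Tr |A|` along the Hilbert basis `b`. -/
noncomputable def traceNormAlong {H : Type} [NormedAddCommGroup H] [InnerProductSpace ℂ H]
    [CompleteSpace H] {ι : Type} (b : HilbertBasis ι ℂ H) (A : H →L[ℂ] H) : ℝ :=
  ∑' i, (⟪b i, absCLM A (b i)⟫_ℂ).re

/-- `A` is a Hilbert–Schmidt operator (along the Hilbert basis `b`). -/
def IsHSAlong {H : Type} [NormedAddCommGroup H] [InnerProductSpace ℂ H]
    [CompleteSpace H] {ι : Type} (b : HilbertBasis ι ℂ H) (A : H →L[ℂ] H) : Prop :=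
  Summable fun i => ‖A (b i)‖ ^ 2

/-- The Hilbert–Schmidt norm `‖A‖₂` along the Hilbert basis `b`. -/
noncomputable def hsNormAlong {H : Type} [NormedAddCommGroup H] [InnerProductSpace ℂ H]
    [CompleteSpace H] {ι : Type} (b : HilbertBasis ι ℂ H) (A : H →L[ℂ] H) : ℝ :=
  Real.sqrt (∑' i, ‖A (b i)‖ ^ 2)

/-- `Cₙ(A) = (1/n!) Σ_{ξ∈Sₙ} sign ξ · Π_{η ∈ Cycle(ξ)} tr(A^{|η|})`, where `trA` is used
for the trace of `A` itself (cycles of length one) and traces of higher powers are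
computed along the Hilbert basis `b`. -/
noncomputable def cycleSum {H : Type} [NormedAddCommGroup H] [InnerProductSpace ℂ H]
    [CompleteSpace H] {ι : Type} (b : HilbertBasis ι ℂ H) (trA : ℂ) (A : H →L[ℂ] H)
    (n : ℕ) : ℂ :=
  ((Nat.factorial n : ℂ))⁻¹ * ∑ ξ : Equiv.Perm (Fin n),
    ((Equiv.Perm.sign ξ : ℤ) : ℂ) * trA ^ (n - ξ.support.card) *
      ∏ η ∈ ξ.cycleFactorsFinset, traceAlong b (A ^ η.support.card)

/-- The extended Fredholm determinant `Det(1+A)` for `A ∈ L_{1|2}(H)`, with respect to the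
splitting given by the projections `P₁, P₂`: `Det(1+A) = 1 + Σ_{n≥1} Cₙ(A)`, where in `Cₙ(A)`
the trace of `A` is taken to be `Tr(A_even)`. -/
noncomputable def fredholmDetExt {H : Type} [NormedAddCommGroup H] [InnerProductSpace ℂ H]
    [CompleteSpace H] {ι : Type} (b : HilbertBasis ι ℂ H) (P₁ P₂ : H →L[ℂ] H)
    (A : H →L[ℂ] H) : ℂ :=
  1 + ∑' n : ℕ, cycleSum b (traceAlong b (P₁ * A * P₁ + P₂ * A * P₂)) A (n + 1)

/-- The classical Fredholm determinant `Det(1+A)` of a trace class operator `A`. -/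
noncomputable def fredholmDetCl {H : Type} [NormedAddCommGroup H] [InnerProductSpace ℂ H]
    [CompleteSpace H] {ι : Type} (b : HilbertBasis ι ℂ H) (A : H →L[ℂ] H) : ℂ :=
  1 + ∑' n : ℕ, cycleSum b (traceAlong b A) A (n + 1)

end
set_option maxHeartbeats 2000000 in
/-- Let `H = H₁ ⊕ H₂` and `A` a bounded `J`-self-adjoint operator with
`0 ≤ Â ≤ 1`, where `Â := AP₁ + (1−A)P₂`.  With `A_even := P₁AP₁ + P₂AP₂` the
block-diagonal part of `A`, one has `‖A‖ = 1` if and only if `‖A_even‖ = 1`. -/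
theorem stmt_6 {H : Type}
    [NormedAddCommGroup H] [InnerProductSpace ℂ H] [CompleteSpace H]
    (P₁ P₂ : H →L[ℂ] H)
    (hP₁ : IsIdempotentElem P₁) (hP₁sa : IsSelfAdjoint P₁)
    (hP₂ : IsIdempotentElem P₂) (hP₂sa : IsSelfAdjoint P₂)
    (hsum : P₁ + P₂ = 1)
    (A : H →L[ℂ] H)
    (hJ : ContinuousLinearMap.adjoint A * (P₁ - P₂) = (P₁ - P₂) * A)
    (hpos : (A * P₁ + (1 - A) * P₂).IsPositive)
    (hle : (1 - (A * P₁ + (1 - A) * P₂)).IsPositive) :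
    ‖A‖ = 1 ↔ ‖P₁ * A * P₁ + P₂ * A * P₂‖ = 1 := by
  set Q : H →L[ℂ] H := P₂ with hQdef
  have hP1eq : P₁ = 1 - Q := eq_sub_of_add_eq hsum
  have hQ : Q * Q = Q := hP₂
  have hXQ : ∀ X : H →L[ℂ] H, X*Q*Q = X*Q := fun X => by rw [mul_assoc, hQ]
  set Ah : H →L[ℂ] H := A * P₁ + (1 - A) * P₂ with hAhdef
  set B : H →L[ℂ] H := Ah - P₂ with hBdef
  set C : H →L[ℂ] H := 1 - Ah with hCdef
  set J : H →L[ℂ] H := P₁ - P₂ with hJdef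
  have hJJ : J * J = 1 := by
    rw [hJdef, hP1eq, ← hQdef]
    simp only [mul_add, add_mul, sub_mul, mul_sub, mul_one, one_mul, ← mul_assoc, hQ, hXQ]
    abel
  have hBJ : B = A * J := by
    rw [hBdef, hAhdef, hJdef]; noncomm_ring
  have hABJ : A = B * J := by
    rw [hBJ, mul_assoc, hJJ, mul_one]
  have hJsa : IsSelfAdjoint J := hP₁sa.sub hP₂sa
  have hJn : ‖J‖ ≤ 1 := by
    have h1 : ‖star J * J‖ = ‖J‖ * ‖J‖ := CStarRing.norm_star_mul_self
    rw [hJsa.star_eq, hJJ] at h1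
    have h2 : ‖(1 : H →L[ℂ] H)‖ ≤ 1 := ContinuousLinearMap.norm_id_le
    nlinarith [norm_nonneg J]
  have hAB : ‖A‖ = ‖B‖ := by
    have h1 : ‖A‖ ≤ ‖B‖ := by
      calc ‖A‖ = ‖B * J‖ := by rw [← hABJ]
        _ ≤ ‖B‖ * ‖J‖ := norm_mul_le _ _
        _ ≤ ‖B‖ * 1 := by nlinarith [norm_nonneg B]
        _ = ‖B‖ := mul_one _
    have h2 : ‖B‖ ≤ ‖A‖ := by
      calc ‖B‖ = ‖A * J‖ := by rw [← hBJ]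
        _ ≤ ‖A‖ * ‖J‖ := norm_mul_le _ _
        _ ≤ ‖A‖ * 1 := by nlinarith [norm_nonneg A]
        _ = ‖A‖ := mul_one _
    linarith
  set E : H →L[ℂ] H := P₁ * A * P₁ + P₂ * A * P₂ with hEdef
  have hsplit : Ah - Ah*Ah = Ah*C*Ah + C*Ah*C := by
    rw [hCdef]; noncomm_ring
  have hkey : E = B*B + (Ah*C*Ah + C*Ah*C) := by
    rw [← hsplit, hEdef, hBdef, hAhdef, hP1eq, ← hQdef]
    simp only [mul_add, add_mul, sub_mul, mul_sub, mul_one, one_mul, ← mul_assoc, hQ, hXQ]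
    abel
  have hAhsa : IsSelfAdjoint Ah := hpos.isSelfAdjoint
  have hCsa : IsSelfAdjoint C := hle.isSelfAdjoint
  have hBsa : IsSelfAdjoint B := hAhsa.sub hP₂sa
  have hpt : ∀ z : H, ‖B z‖^2 ≤ Complex.re ⟪z, E z⟫_ℂ := by
    intro z
    have hBz : Complex.re ⟪z, (B*B) z⟫_ℂ = ‖B z‖^2 := by
      have h : (B*B) z = B (B z) := rfl
      rw [h, ← ContinuousLinearMap.adjoint_inner_left B (B z) z,
        ContinuousLinearMap.isSelfAdjoint_iff'.mp hBsa]
      have := inner_self_eq_norm_sq (𝕜 := ℂ) (B z)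
      exact_mod_cast this
    have h1 : Complex.re ⟪z, (Ah*C*Ah) z⟫_ℂ = Complex.re ⟪Ah z, C (Ah z)⟫_ℂ := by
      have h : (Ah*C*Ah) z = Ah (C (Ah z)) := rfl
      rw [h, ← ContinuousLinearMap.adjoint_inner_left Ah (C (Ah z)) z,
        ContinuousLinearMap.isSelfAdjoint_iff'.mp hAhsa]
    have h2 : Complex.re ⟪z, (C*Ah*C) z⟫_ℂ = Complex.re ⟪C z, Ah (C z)⟫_ℂ := by
      have h : (C*Ah*C) z = C (Ah (C z)) := rfl
      rw [h, ← ContinuousLinearMap.adjoint_inner_left C (Ah (C z)) z,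
        ContinuousLinearMap.isSelfAdjoint_iff'.mp hCsa]
    have hp1 : 0 ≤ Complex.re ⟪Ah z, C (Ah z)⟫_ℂ := (Complex.nonneg_iff.mp (hle.inner_nonneg_right (Ah z))).1
    have hp2 : 0 ≤ Complex.re ⟪C z, Ah (C z)⟫_ℂ := (Complex.nonneg_iff.mp (hpos.inner_nonneg_right (C z))).1
    rw [hkey]
    simp only [ContinuousLinearMap.add_apply, inner_add_right, Complex.add_re]
    rw [hBz, h1, h2]
    linarith
  have hB2E : ‖B‖^2 ≤ ‖E‖ := by
    have hEnn : (0:ℝ) ≤ ‖E‖ := norm_nonneg _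
    have hle' : ‖B‖ ≤ Real.sqrt ‖E‖ := by
      apply ContinuousLinearMap.opNorm_le_bound _ (Real.sqrt_nonneg _)
      intro z
      have h1 := hpt z
      have h2 : Complex.re ⟪z, E z⟫_ℂ ≤ ‖E‖ * ‖z‖^2 := by
        have h0 := norm_inner_le_norm (𝕜 := ℂ) z (E z)
        have h3 : Complex.re ⟪z, E z⟫_ℂ ≤ ‖⟪z, E z⟫_ℂ‖ := Complex.re_le_norm _
        have h4 : ‖E z‖ ≤ ‖E‖ * ‖z‖ := E.le_opNorm z
        nlinarith [norm_nonneg z, norm_nonneg (E z)]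
      have h5 : ‖B z‖^2 ≤ (Real.sqrt ‖E‖ * ‖z‖)^2 := by
        rw [mul_pow, Real.sq_sqrt hEnn]; nlinarith
      have h6 : (0:ℝ) ≤ Real.sqrt ‖E‖ * ‖z‖ := by positivity
      nlinarith [norm_nonneg (B z)]
    nlinarith [norm_nonneg B, Real.sq_sqrt hEnn, Real.sqrt_nonneg ‖E‖]
  have hEA : ‖E‖ ≤ ‖A‖ := by
    have h2 : E + E = A + J*A*J := by
      rw [hEdef, hJdef, hP1eq]
      simp only [mul_add, add_mul, sub_mul, mul_sub, mul_one, one_mul, ← mul_assoc, hQ, hXQ]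
      abel
    have h3 : ‖J*A*J‖ ≤ ‖A‖ := by
      calc ‖J*A*J‖ ≤ ‖J*A‖*‖J‖ := norm_mul_le _ _
        _ ≤ ‖J‖*‖A‖*‖J‖ := by
            have := norm_mul_le J A
            nlinarith [norm_nonneg J, norm_nonneg A, norm_nonneg (J*A)]
        _ ≤ 1*‖A‖*1 := by gcongr <;> exact hJn
        _ = ‖A‖ := by ring
    have h4 : ‖E + E‖ = 2 * ‖E‖ := by
      rw [show E + E = (2:ℝ) • E by rw [two_smul], norm_smul]; simp
    have h5 : ‖A + J*A*J‖ ≤ ‖A‖ + ‖J*A*J‖ := norm_add_le _ _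
    rw [h2] at h4
    linarith
  constructor
  · intro h
    have h1 : 1 ≤ ‖E‖ := by rw [hAB] at h; nlinarith
    linarith [hEA, h.le, h.ge]
  · intro h
    have h1 : 1 ≤ ‖A‖ := by rw [h] at hEA; exact hEA
    have h2 : ‖A‖ ≤ 1 := by
      rw [hAB]; rw [h] at hB2E; nlinarith [norm_nonneg B]
    linarith
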